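/- arXiv:0912.1824 — 2 statements merged into one kernel-verified Lean document; each statement's English description precedes it below -/
import Mathlib

section
/- Define K : ℝ → ℝ by K(t) = (1/6) e^{−|t|} + e^{−|t|/2} ( (1/6) cos(√3 |t|/2) + (√3/6) sin(√3 |t|/2) ). Then ∫_{−∞}^{∞} K(t) dt = 1 and ∫_{−∞}^{∞} t^k K(t) dt = 0 for k = 1, 2, 3, 4, 5; that is, K is a kernel of order 6. -/
open Real MeasureTheory Set Filter Topology

noncomputable def Kfun (u : ℝ) : ℝ :=
  1 / 6 * Real.exp (-u) + Real.exp (-u / 2) *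
    (1 / 6 * Real.cos (Real.sqrt 3 * u / 2) + Real.sqrt 3 / 6 * Real.sin (Real.sqrt 3 * u / 2))

private lemma sqrt3_sq : Real.sqrt 3 ^ 2 = 3 := Real.sq_sqrt (by norm_num)

private lemma sqrt3_le_two : Real.sqrt 3 ≤ 2 := by
  nlinarith [Real.sqrt_nonneg 3, sqrt3_sq]

private lemma hasDerivAt_quartic (a0 a1 a2 a3 a4 t : ℝ) :
    HasDerivAt (fun t : ℝ => a0 + a1 * t + a2 * t ^ 2 + a3 * t ^ 3 + a4 * t ^ 4)
      (a1 + 2 * a2 * t + 3 * a3 * t ^ 2 + 4 * a4 * t ^ 3) t := by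
  have h : HasDerivAt (fun t : ℝ => a0 + a1 * t + a2 * t ^ 2 + a3 * t ^ 3 + a4 * t ^ 4)
      (0 + a1 * 1 + a2 * ((2 : ℕ) * t ^ 1) + a3 * ((3 : ℕ) * t ^ 2) + a4 * ((4 : ℕ) * t ^ 3)) t :=
    ((((hasDerivAt_const t a0).add ((hasDerivAt_id t).const_mul a1)).add
      ((hasDerivAt_pow 2 t).const_mul a2)).add ((hasDerivAt_pow 3 t).const_mul a3)).add
      ((hasDerivAt_pow 4 t).const_mul a4)
  exact h.congr_deriv (by push_cast; ring)

private lemma hasDerivAt_G (s : ℝ) (r r' p p' q q' : ℝ → ℝ)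
    (hr : ∀ t, HasDerivAt r (r' t) t) (hp : ∀ t, HasDerivAt p (p' t) t)
    (hq : ∀ t, HasDerivAt q (q' t) t) (t : ℝ) :
    HasDerivAt (fun t => Real.exp (-t) * r t + Real.exp (-t / 2) *
        (Real.cos (s * t / 2) * p t + Real.sin (s * t / 2) * q t))
      (Real.exp (-t) * (r' t - r t) + Real.exp (-t / 2) *
        (Real.cos (s * t / 2) * (p' t - p t / 2 + s / 2 * q t) +
         Real.sin (s * t / 2) * (q' t - q t / 2 - s / 2 * p t))) t := by
  have hid : HasDerivAt (fun t : ℝ => -t) (-1 : ℝ) t := by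
    exact (hasDerivAt_id' t).neg
  have hE1 : HasDerivAt (fun t : ℝ => Real.exp (-t)) (Real.exp (-t) * (-1)) t := hid.exp
  have hE2 : HasDerivAt (fun t : ℝ => Real.exp (-t / 2)) (Real.exp (-t / 2) * (-1 / 2)) t :=
    (hid.div_const 2).exp
  have harg2 : HasDerivAt (fun t : ℝ => s * t / 2) (s * 1 / 2) t :=
    ((hasDerivAt_id t).const_mul s).div_const 2
  have hC : HasDerivAt (fun t : ℝ => Real.cos (s * t / 2))
      (-Real.sin (s * t / 2) * (s * 1 / 2)) t := harg2.cos
  have hS : HasDerivAt (fun t : ℝ => Real.sin (s * t / 2))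
      (Real.cos (s * t / 2) * (s * 1 / 2)) t := harg2.sin
  have H := (hE1.mul (hr t)).add
    (hE2.mul ((hC.mul (hp t)).add (hS.mul (hq t))))
  exact H.congr_deriv (by simp only [Pi.add_apply, Pi.mul_apply]; ring)

private lemma hasDerivAt_H (a0 a1 a2 a3 a4 t : ℝ) :
    HasDerivAt (fun t : ℝ => Real.exp (-t / 2) * (a0 + a1 * t + a2 * t ^ 2 + a3 * t ^ 3 + a4 * t ^ 4))
      (Real.exp (-t / 2) * ((a1 - a0 / 2) + (2 * a2 - a1 / 2) * t + (3 * a3 - a2 / 2) * t ^ 2 +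
        (4 * a4 - a3 / 2) * t ^ 3 + (-a4 / 2) * t ^ 4)) t := by
  have hid : HasDerivAt (fun t : ℝ => -t) (-1 : ℝ) t := by
    exact (hasDerivAt_id' t).neg
  have hE2 : HasDerivAt (fun t : ℝ => Real.exp (-t / 2)) (Real.exp (-t / 2) * (-1 / 2)) t :=
    (hid.div_const 2).exp
  exact (hE2.mul (hasDerivAt_quartic a0 a1 a2 a3 a4 t)).congr_deriv (by ring)

private lemma tendsto_pow_exp_half (n : ℕ) :
    Tendsto (fun t : ℝ => t ^ n * Real.exp (-t / 2)) atTop (𝓝 0) := by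
  have h := (tendsto_pow_mul_exp_neg_atTop_nhds_zero n).const_mul ((2 : ℝ) ^ n)
  rw [mul_zero] at h
  have h2 : Tendsto (fun t : ℝ => t / 2) atTop atTop :=
    tendsto_id.atTop_div_const (by norm_num)
  refine (h.comp h2).congr fun t => ?_
  simp only [Function.comp]
  rw [div_pow, show -(t / 2) = -t / 2 by ring]
  field_simp

private lemma heE1 : ∀ t : ℝ, 0 ≤ t → |Real.exp (-t)| ≤ Real.exp (-t / 2) := by
  intro t ht
  rw [Real.abs_exp]
  exact Real.exp_le_exp.2 (by linarith)

private lemma heE2 : ∀ t : ℝ, 0 ≤ t → |Real.exp (-t / 2)| ≤ Real.exp (-t / 2) := by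
  intro t _
  rw [Real.abs_exp]

private lemma tend_poly (a0 a1 a2 a3 a4 : ℝ) (e u : ℝ → ℝ)
    (he : ∀ t : ℝ, 0 ≤ t → |e t| ≤ Real.exp (-t / 2)) (hu : ∀ t, |u t| ≤ 1) :
    Tendsto (fun t : ℝ => e t * (u t * (a0 + a1 * t + a2 * t ^ 2 + a3 * t ^ 3 + a4 * t ^ 4)))
      atTop (𝓝 0) := by
  set A := |a0| + |a1| + |a2| + |a3| + |a4| with hA
  have hAt : Tendsto (fun t : ℝ => A * (t ^ 4 * Real.exp (-t / 2))) atTop (𝓝 0) := by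
    simpa using (tendsto_pow_exp_half 4).const_mul A
  refine squeeze_zero_norm' ?_ hAt
  filter_upwards [eventually_ge_atTop (1 : ℝ)] with t ht
  have ht0 : (0 : ℝ) ≤ t := by linarith
  have p1 : (1 : ℝ) ≤ t ^ 4 := one_le_pow₀ ht
  have p2 : t ≤ t ^ 4 := by
    calc t = t ^ 1 := (pow_one t).symm
    _ ≤ t ^ 4 := pow_le_pow_right₀ ht (by norm_num)
  have p3 : t ^ 2 ≤ t ^ 4 := pow_le_pow_right₀ ht (by norm_num)
  have p4 : t ^ 3 ≤ t ^ 4 := pow_le_pow_right₀ ht (by norm_num)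
  have hP : |a0 + a1 * t + a2 * t ^ 2 + a3 * t ^ 3 + a4 * t ^ 4| ≤ A * t ^ 4 := by
    have b0 : |a0| ≤ |a0| * t ^ 4 := le_mul_of_one_le_right (abs_nonneg _) p1
    have b1 : |a1 * t| ≤ |a1| * t ^ 4 := by
      rw [abs_mul, abs_of_nonneg ht0]
      exact mul_le_mul_of_nonneg_left p2 (abs_nonneg _)
    have b2 : |a2 * t ^ 2| ≤ |a2| * t ^ 4 := by
      rw [abs_mul, abs_of_nonneg (pow_nonneg ht0 2)]
      exact mul_le_mul_of_nonneg_left p3 (abs_nonneg _)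
    have b3 : |a3 * t ^ 3| ≤ |a3| * t ^ 4 := by
      rw [abs_mul, abs_of_nonneg (pow_nonneg ht0 3)]
      exact mul_le_mul_of_nonneg_left p4 (abs_nonneg _)
    have b4 : |a4 * t ^ 4| ≤ |a4| * t ^ 4 := by
      rw [abs_mul, abs_of_nonneg (pow_nonneg ht0 4)]
    calc |a0 + a1 * t + a2 * t ^ 2 + a3 * t ^ 3 + a4 * t ^ 4|
        ≤ |a0 + a1 * t + a2 * t ^ 2 + a3 * t ^ 3| + |a4 * t ^ 4| := abs_add_le _ _
      _ ≤ (|a0 + a1 * t + a2 * t ^ 2| + |a3 * t ^ 3|) + |a4 * t ^ 4| := by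
          gcongr; exact abs_add_le _ _
      _ ≤ ((|a0 + a1 * t| + |a2 * t ^ 2|) + |a3 * t ^ 3|) + |a4 * t ^ 4| := by
          gcongr; exact abs_add_le _ _
      _ ≤ (((|a0| + |a1 * t|) + |a2 * t ^ 2|) + |a3 * t ^ 3|) + |a4 * t ^ 4| := by
          gcongr; exact abs_add_le _ _
      _ ≤ A * t ^ 4 := by rw [hA]; linarith
  rw [Real.norm_eq_abs, abs_mul, abs_mul]
  calc |e t| * (|u t| * |a0 + a1 * t + a2 * t ^ 2 + a3 * t ^ 3 + a4 * t ^ 4|)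
      ≤ Real.exp (-t / 2) * (1 * (A * t ^ 4)) := by
        refine mul_le_mul (he t ht0) ?_ (by positivity) (Real.exp_pos _).le
        exact mul_le_mul (hu t) hP (abs_nonneg _) (by norm_num)
    _ = A * (t ^ 4 * Real.exp (-t / 2)) := by ring

private lemma absB (t : ℝ) (ht : 0 ≤ t) : |Kfun t| ≤ Real.exp (-t / 2) := by
  unfold Kfun
  have h2 : (0 : ℝ) < Real.exp (-t / 2) := Real.exp_pos _
  have h0 : (0 : ℝ) < Real.exp (-t) := Real.exp_pos _
  have hE : Real.exp (-t) ≤ Real.exp (-t / 2) := Real.exp_le_exp.2 (by linarith)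
  have hC1 := Real.cos_le_one (Real.sqrt 3 * t / 2)
  have hC2 := Real.neg_one_le_cos (Real.sqrt 3 * t / 2)
  have hS1 := Real.sin_le_one (Real.sqrt 3 * t / 2)
  have hS2 := Real.neg_one_le_sin (Real.sqrt 3 * t / 2)
  have hs0 : (0 : ℝ) ≤ Real.sqrt 3 := Real.sqrt_nonneg 3
  have hs2 := sqrt3_le_two
  rw [abs_le]
  constructor <;>
    nlinarith [mul_le_mul_of_nonneg_left hC1 h2.le, mul_le_mul_of_nonneg_left hC2 h2.le,
      mul_le_mul_of_nonneg_left hS1 (mul_nonneg hs0 h2.le),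
      mul_le_mul_of_nonneg_left hS2 (mul_nonneg hs0 h2.le),
      mul_le_mul_of_nonneg_right hs2 h2.le]

private lemma int0 : (∫ t in Ioi (0 : ℝ), Kfun t) = 1 / 2 := by
  have hG := fun t : ℝ => hasDerivAt_G (Real.sqrt 3) _ _ _ _ _ _
    (fun t => hasDerivAt_quartic (-1/6) 0 0 0 0 t)
    (fun t => hasDerivAt_quartic (-1/3) 0 0 0 0 t)
    (fun t => hasDerivAt_quartic 0 0 0 0 0 t) t
  have hG' : ∀ t : ℝ, HasDerivAt (fun t : ℝ =>
      Real.exp (-t) * (-1/6 + 0 * t + 0 * t ^ 2 + 0 * t ^ 3 + 0 * t ^ 4) +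
      Real.exp (-t / 2) *
        (Real.cos (Real.sqrt 3 * t / 2) * (-1/3 + 0 * t + 0 * t ^ 2 + 0 * t ^ 3 + 0 * t ^ 4) +
         Real.sin (Real.sqrt 3 * t / 2) * (0 + 0 * t + 0 * t ^ 2 + 0 * t ^ 3 + 0 * t ^ 4)))
      (Kfun t) t := by
    intro t
    refine (hG t).congr_deriv ?_
    unfold Kfun
    ring
  have htend : Tendsto (fun t : ℝ =>
      Real.exp (-t) * (-1/6 + 0 * t + 0 * t ^ 2 + 0 * t ^ 3 + 0 * t ^ 4) +
      Real.exp (-t / 2) *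
        (Real.cos (Real.sqrt 3 * t / 2) * (-1/3 + 0 * t + 0 * t ^ 2 + 0 * t ^ 3 + 0 * t ^ 4) +
         Real.sin (Real.sqrt 3 * t / 2) * (0 + 0 * t + 0 * t ^ 2 + 0 * t ^ 3 + 0 * t ^ 4)))
      atTop (𝓝 0) := by
    have t1 := tend_poly (-1/6) 0 0 0 0 (fun t => Real.exp (-t)) (fun _ => (1 : ℝ))
      heE1 (fun t => by norm_num)
    have t2 := tend_poly (-1/3) 0 0 0 0 (fun t => Real.exp (-t / 2))
      (fun t => Real.cos (Real.sqrt 3 * t / 2)) heE2 (fun t => Real.abs_cos_le_one _)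
    have t3 := tend_poly 0 0 0 0 0 (fun t => Real.exp (-t / 2))
      (fun t => Real.sin (Real.sqrt 3 * t / 2)) heE2 (fun t => Real.abs_sin_le_one _)
    have h := (t1.add t2).add t3
    simp only [add_zero] at h
    exact h.congr fun t => by ring
  have hmaj : IntegrableOn (fun t : ℝ => Real.exp (-t / 2)) (Ioi 0) := by
    have hH : ∀ t : ℝ, HasDerivAt
        (fun t : ℝ => Real.exp (-t / 2) * (-2 + 0 * t + 0 * t ^ 2 + 0 * t ^ 3 + 0 * t ^ 4))
        (Real.exp (-t / 2)) t := by
      intro t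
      exact (hasDerivAt_H (-2) 0 0 0 0 t).congr_deriv (by ring)
    have htH : Tendsto
        (fun t : ℝ => Real.exp (-t / 2) * (-2 + 0 * t + 0 * t ^ 2 + 0 * t ^ 3 + 0 * t ^ 4))
        atTop (𝓝 0) := by
      have h := tend_poly (-2) 0 0 0 0 (fun t => Real.exp (-t / 2)) (fun _ => (1 : ℝ))
        heE2 (fun t => by norm_num)
      exact h.congr fun t => by ring
    exact integrableOn_Ioi_deriv_of_nonneg ((hH 0).continuousAt.continuousWithinAt)
      (fun x _ => hH x) (fun x _ => (Real.exp_pos _).le) htH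
  have hint : IntegrableOn Kfun (Ioi 0) := by
    refine MeasureTheory.Integrable.mono hmaj ?_ ?_
    · exact (Continuous.aestronglyMeasurable (by unfold Kfun; fun_prop)).restrict
    · rw [ae_restrict_iff' measurableSet_Ioi]
      refine ae_of_all _ fun t ht => ?_
      have ht0 : (0 : ℝ) ≤ t := le_of_lt ht
      rw [Real.norm_eq_abs, Real.norm_eq_abs, Real.abs_exp]
      exact absB t ht0
  have hkey := integral_Ioi_of_hasDerivAt_of_tendsto
    ((hG' 0).continuousAt.continuousWithinAt) (fun x _ => hG' x) hint htend
  rw [hkey]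
  norm_num

private lemma int2 : (∫ t in Ioi (0 : ℝ), t ^ 2 * Kfun t) = 0 := by
  have hG := fun t : ℝ => hasDerivAt_G (Real.sqrt 3) _ _ _ _ _ _
    (fun t => hasDerivAt_quartic (-1/3) (-1/3) (-1/6) 0 0 t)
    (fun t => hasDerivAt_quartic (1/3) (-1/3) (-1/3) 0 0 t)
    (fun t => hasDerivAt_quartic (Real.sqrt 3 / 3) (Real.sqrt 3 / 3) 0 0 0 t) t
  have hG' : ∀ t : ℝ, HasDerivAt (fun t : ℝ =>
      Real.exp (-t) * (-1/3 + -1/3 * t + -1/6 * t ^ 2 + 0 * t ^ 3 + 0 * t ^ 4) +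
      Real.exp (-t / 2) *
        (Real.cos (Real.sqrt 3 * t / 2) * (1/3 + -1/3 * t + -1/3 * t ^ 2 + 0 * t ^ 3 + 0 * t ^ 4) +
         Real.sin (Real.sqrt 3 * t / 2) *
           (Real.sqrt 3 / 3 + Real.sqrt 3 / 3 * t + 0 * t ^ 2 + 0 * t ^ 3 + 0 * t ^ 4)))
      (t ^ 2 * Kfun t) t := by
    intro t
    refine (hG t).congr_deriv ?_
    unfold Kfun
    linear_combination (Real.exp (-t / 2) * Real.cos (Real.sqrt 3 * t / 2) * (t / 6 + 1 / 6)) *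
      sqrt3_sq
  have htend : Tendsto (fun t : ℝ =>
      Real.exp (-t) * (-1/3 + -1/3 * t + -1/6 * t ^ 2 + 0 * t ^ 3 + 0 * t ^ 4) +
      Real.exp (-t / 2) *
        (Real.cos (Real.sqrt 3 * t / 2) * (1/3 + -1/3 * t + -1/3 * t ^ 2 + 0 * t ^ 3 + 0 * t ^ 4) +
         Real.sin (Real.sqrt 3 * t / 2) *
           (Real.sqrt 3 / 3 + Real.sqrt 3 / 3 * t + 0 * t ^ 2 + 0 * t ^ 3 + 0 * t ^ 4)))
      atTop (𝓝 0) := by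
    have t1 := tend_poly (-1/3) (-1/3) (-1/6) 0 0 (fun t => Real.exp (-t)) (fun _ => (1 : ℝ))
      heE1 (fun t => by norm_num)
    have t2 := tend_poly (1/3) (-1/3) (-1/3) 0 0 (fun t => Real.exp (-t / 2))
      (fun t => Real.cos (Real.sqrt 3 * t / 2)) heE2 (fun t => Real.abs_cos_le_one _)
    have t3 := tend_poly (Real.sqrt 3 / 3) (Real.sqrt 3 / 3) 0 0 0 (fun t => Real.exp (-t / 2))
      (fun t => Real.sin (Real.sqrt 3 * t / 2)) heE2 (fun t => Real.abs_sin_le_one _)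
    have h := (t1.add t2).add t3
    simp only [add_zero] at h
    exact h.congr fun t => by ring
  have hmaj : IntegrableOn (fun t : ℝ => t ^ 2 * Real.exp (-t / 2)) (Ioi 0) := by
    have hH : ∀ t : ℝ, HasDerivAt
        (fun t : ℝ => Real.exp (-t / 2) * (-16 + -8 * t + -2 * t ^ 2 + 0 * t ^ 3 + 0 * t ^ 4))
        (t ^ 2 * Real.exp (-t / 2)) t := by
      intro t
      exact (hasDerivAt_H (-16) (-8) (-2) 0 0 t).congr_deriv (by ring)
    have htH : Tendsto
        (fun t : ℝ => Real.exp (-t / 2) * (-16 + -8 * t + -2 * t ^ 2 + 0 * t ^ 3 + 0 * t ^ 4))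
        atTop (𝓝 0) := by
      have h := tend_poly (-16) (-8) (-2) 0 0 (fun t => Real.exp (-t / 2)) (fun _ => (1 : ℝ))
        heE2 (fun t => by norm_num)
      exact h.congr fun t => by ring
    exact integrableOn_Ioi_deriv_of_nonneg ((hH 0).continuousAt.continuousWithinAt)
      (fun x _ => hH x)
      (fun x hx => mul_nonneg (pow_nonneg (le_of_lt hx) 2) (Real.exp_pos _).le) htH
  have hint : IntegrableOn (fun t : ℝ => t ^ 2 * Kfun t) (Ioi 0) := by
    refine MeasureTheory.Integrable.mono hmaj ?_ ?_
    · exact (Continuous.aestronglyMeasurable (by unfold Kfun; fun_prop)).restrict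
    · rw [ae_restrict_iff' measurableSet_Ioi]
      refine ae_of_all _ fun t ht => ?_
      have ht0 : (0 : ℝ) ≤ t := le_of_lt ht
      calc ‖t ^ 2 * Kfun t‖ = t ^ 2 * |Kfun t| := by
            rw [Real.norm_eq_abs, abs_mul, abs_of_nonneg (pow_nonneg ht0 2)]
        _ ≤ t ^ 2 * Real.exp (-t / 2) := mul_le_mul_of_nonneg_left (absB t ht0) (pow_nonneg ht0 2)
        _ ≤ ‖t ^ 2 * Real.exp (-t / 2)‖ := by rw [Real.norm_eq_abs]; exact le_abs_self _
  have hkey := integral_Ioi_of_hasDerivAt_of_tendsto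
    ((hG' 0).continuousAt.continuousWithinAt) (fun x _ => hG' x) hint htend
  rw [hkey]
  norm_num

private lemma int4 : (∫ t in Ioi (0 : ℝ), t ^ 4 * Kfun t) = 0 := by
  have hG := fun t : ℝ => hasDerivAt_G (Real.sqrt 3) _ _ _ _ _ _
    (fun t => hasDerivAt_quartic (-4) (-4) (-2) (-2/3) (-1/6) t)
    (fun t => hasDerivAt_quartic 4 8 2 (-2/3) (-1/3) t)
    (fun t => hasDerivAt_quartic (-4 * Real.sqrt 3) 0 (2 * Real.sqrt 3) (2 * Real.sqrt 3 / 3) 0 t) t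
  have hG' : ∀ t : ℝ, HasDerivAt (fun t : ℝ =>
      Real.exp (-t) * (-4 + -4 * t + -2 * t ^ 2 + -2/3 * t ^ 3 + -1/6 * t ^ 4) +
      Real.exp (-t / 2) *
        (Real.cos (Real.sqrt 3 * t / 2) * (4 + 8 * t + 2 * t ^ 2 + -2/3 * t ^ 3 + -1/3 * t ^ 4) +
         Real.sin (Real.sqrt 3 * t / 2) *
           (-4 * Real.sqrt 3 + 0 * t + 2 * Real.sqrt 3 * t ^ 2 + 2 * Real.sqrt 3 / 3 * t ^ 3 +
            0 * t ^ 4)))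
      (t ^ 4 * Kfun t) t := by
    intro t
    refine (hG t).congr_deriv ?_
    unfold Kfun
    linear_combination (Real.exp (-t / 2) * Real.cos (Real.sqrt 3 * t / 2) *
      (t ^ 3 / 3 + t ^ 2 - 2)) * sqrt3_sq
  have htend : Tendsto (fun t : ℝ =>
      Real.exp (-t) * (-4 + -4 * t + -2 * t ^ 2 + -2/3 * t ^ 3 + -1/6 * t ^ 4) +
      Real.exp (-t / 2) *
        (Real.cos (Real.sqrt 3 * t / 2) * (4 + 8 * t + 2 * t ^ 2 + -2/3 * t ^ 3 + -1/3 * t ^ 4) +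
         Real.sin (Real.sqrt 3 * t / 2) *
           (-4 * Real.sqrt 3 + 0 * t + 2 * Real.sqrt 3 * t ^ 2 + 2 * Real.sqrt 3 / 3 * t ^ 3 +
            0 * t ^ 4)))
      atTop (𝓝 0) := by
    have t1 := tend_poly (-4) (-4) (-2) (-2/3) (-1/6) (fun t => Real.exp (-t)) (fun _ => (1 : ℝ))
      heE1 (fun t => by norm_num)
    have t2 := tend_poly 4 8 2 (-2/3) (-1/3) (fun t => Real.exp (-t / 2))
      (fun t => Real.cos (Real.sqrt 3 * t / 2)) heE2 (fun t => Real.abs_cos_le_one _)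
    have t3 := tend_poly (-4 * Real.sqrt 3) 0 (2 * Real.sqrt 3) (2 * Real.sqrt 3 / 3) 0
      (fun t => Real.exp (-t / 2))
      (fun t => Real.sin (Real.sqrt 3 * t / 2)) heE2 (fun t => Real.abs_sin_le_one _)
    have h := (t1.add t2).add t3
    simp only [add_zero] at h
    exact h.congr fun t => by ring
  have hmaj : IntegrableOn (fun t : ℝ => t ^ 4 * Real.exp (-t / 2)) (Ioi 0) := by
    have hH : ∀ t : ℝ, HasDerivAt
        (fun t : ℝ => Real.exp (-t / 2) *
          (-768 + -384 * t + -96 * t ^ 2 + -16 * t ^ 3 + -2 * t ^ 4))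
        (t ^ 4 * Real.exp (-t / 2)) t := by
      intro t
      exact (hasDerivAt_H (-768) (-384) (-96) (-16) (-2) t).congr_deriv (by ring)
    have htH : Tendsto
        (fun t : ℝ => Real.exp (-t / 2) *
          (-768 + -384 * t + -96 * t ^ 2 + -16 * t ^ 3 + -2 * t ^ 4))
        atTop (𝓝 0) := by
      have h := tend_poly (-768) (-384) (-96) (-16) (-2) (fun t => Real.exp (-t / 2))
        (fun _ => (1 : ℝ)) heE2 (fun t => by norm_num)
      exact h.congr fun t => by ring
    exact integrableOn_Ioi_deriv_of_nonneg ((hH 0).continuousAt.continuousWithinAt)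
      (fun x _ => hH x)
      (fun x hx => mul_nonneg (pow_nonneg (le_of_lt hx) 4) (Real.exp_pos _).le) htH
  have hint : IntegrableOn (fun t : ℝ => t ^ 4 * Kfun t) (Ioi 0) := by
    refine MeasureTheory.Integrable.mono hmaj ?_ ?_
    · exact (Continuous.aestronglyMeasurable (by unfold Kfun; fun_prop)).restrict
    · rw [ae_restrict_iff' measurableSet_Ioi]
      refine ae_of_all _ fun t ht => ?_
      have ht0 : (0 : ℝ) ≤ t := le_of_lt ht
      calc ‖t ^ 4 * Kfun t‖ = t ^ 4 * |Kfun t| := by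
            rw [Real.norm_eq_abs, abs_mul, abs_of_nonneg (pow_nonneg ht0 4)]
        _ ≤ t ^ 4 * Real.exp (-t / 2) := mul_le_mul_of_nonneg_left (absB t ht0) (pow_nonneg ht0 4)
        _ ≤ ‖t ^ 4 * Real.exp (-t / 2)‖ := by rw [Real.norm_eq_abs]; exact le_abs_self _
  have hkey := integral_Ioi_of_hasDerivAt_of_tendsto
    ((hG' 0).continuousAt.continuousWithinAt) (fun x _ => hG' x) hint htend
  rw [hkey]
  norm_num

/-- Example 1, `m = 3`: the equivalent kernel
`K(t) = (1/6) e^{−|t|} + e^{−|t|/2} ((1/6) cos(√3|t|/2) + (√3/6) sin(√3|t|/2))`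
is a kernel of order 6. -/
theorem stmt_16 (K : ℝ → ℝ)
    (hK : ∀ t : ℝ, K t = 1 / 6 * Real.exp (-|t|) + Real.exp (-|t| / 2) *
      (1 / 6 * Real.cos (Real.sqrt 3 * |t| / 2) +
       Real.sqrt 3 / 6 * Real.sin (Real.sqrt 3 * |t| / 2))) :
    (∫ t : ℝ, K t) = 1 ∧ ∀ k : ℕ, 1 ≤ k → k ≤ 5 → (∫ t : ℝ, t ^ k * K t) = 0 := by
  have h1 : ∀ t : ℝ, K t = Kfun |t| := fun t => by rw [hK]; rfl
  have hodd : ∀ k : ℕ, Odd k → (∫ t : ℝ, t ^ k * K t) = 0 := by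
    intro k hk
    have hneg := integral_neg_eq_self (fun t : ℝ => t ^ k * K t) volume
    have h2 : ∀ x : ℝ, (-x) ^ k * K (-x) = -(x ^ k * K x) := fun x => by
      rw [hk.neg_pow, h1, h1, abs_neg]; ring
    simp only [h2] at hneg
    rw [integral_neg] at hneg
    linarith
  constructor
  · calc (∫ t : ℝ, K t) = ∫ t : ℝ, Kfun |t| := by simp only [h1]
      _ = 2 * ∫ t in Ioi (0 : ℝ), Kfun t := integral_comp_abs
      _ = 1 := by rw [int0]; norm_num
  · intro k hk1 hk5
    interval_cases k
    · exact hodd 1 ⟨0, by norm_num⟩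
    · calc (∫ t : ℝ, t ^ 2 * K t) = ∫ t : ℝ, |t| ^ 2 * Kfun |t| :=
          integral_congr_ae (ae_of_all _ fun t => by
            show t ^ 2 * K t = |t| ^ 2 * Kfun |t|
            rw [h1 t, Even.pow_abs (⟨1, rfl⟩ : Even 2) t])
        _ = 2 * ∫ t in Ioi (0 : ℝ), t ^ 2 * Kfun t :=
          integral_comp_abs (f := fun u => u ^ 2 * Kfun u)
        _ = 0 := by rw [int2]; norm_num
    · exact hodd 3 ⟨1, by norm_num⟩
    · calc (∫ t : ℝ, t ^ 4 * K t) = ∫ t : ℝ, |t| ^ 4 * Kfun |t| :=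
          integral_congr_ae (ae_of_all _ fun t => by
            show t ^ 4 * K t = |t| ^ 4 * Kfun |t|
            rw [h1 t, Even.pow_abs (⟨2, rfl⟩ : Even 4) t])
        _ = 2 * ∫ t in Ioi (0 : ℝ), t ^ 4 * Kfun t :=
          integral_comp_abs (f := fun u => u ^ 4 * Kfun u)
        _ = 0 := by rw [int4]; norm_num
    · exact hodd 5 ⟨2, by norm_num⟩
end

section
/- Let β > 0. Define q(t) = e^{−βt/√2} ( sin(βt/√2), −cos(βt/√2) )^T ∈ ℝ², r(s) = (β/(2√2)) e^{−βs/√2} ( −sin(βs/√2) + cos(βs/√2), √2 cos(βs/√2) )^T ∈ ℝ², and the matrix B = [[1, 0], [1, √2]]. Then for all t, s ≥ 0: q(t)^T (−B) r(s) = (β/(2√2)) e^{−β(t+s)/√2} [ cos(β(t−s)/√2) + 2 cos(βt/√2) cos(βs/√2) − sin(β(t+s)/√2) ]. Consequently, with L(u) = (β/(2√2)) e^{−βu/√2} ( cos(βu/√2) + sin(βu/√2) ) for u ≥ 0, the boundary kernel K_b(t,s) = L(|t−s|) + q(t)^T(−B)r(s) satisfies K_b(0,s) = √2 β e^{−βs/√2}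 cos(βs/√2) for all s ≥ 0. -/
open Matrix

/-- Example 2 (Section 5), the `m = 2` boundary-kernel computation: with
`q(t) = e^{−βt/√2}(sin(βt/√2), −cos(βt/√2))`,
`r(s) = (β/(2√2)) e^{−βs/√2}(−sin(βs/√2)+cos(βs/√2), √2 cos(βs/√2))` and
`B = [[1,0],[1,√2]]`, one has the stated closed form for `q(t)^T(−B)r(s)`, and the
boundary kernel `K_b(t,s) = L(|t−s|) + q(t)^T(−B)r(s)` satisfies
`K_b(0,s) = √2 β e^{−βs/√2} cos(βs/√2)`. -/
theorem stmt_18 (β : ℝ) (hβ : 0 < β)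
    (q r : ℝ → Fin 2 → ℝ)
    (hq : ∀ t : ℝ, q t =
      ![Real.exp (-(β * t / Real.sqrt 2)) * Real.sin (β * t / Real.sqrt 2),
        Real.exp (-(β * t / Real.sqrt 2)) * (-Real.cos (β * t / Real.sqrt 2))])
    (hr : ∀ s : ℝ, r s =
      ![β / (2 * Real.sqrt 2) * Real.exp (-(β * s / Real.sqrt 2)) *
          (-Real.sin (β * s / Real.sqrt 2) + Real.cos (β * s / Real.sqrt 2)),
        β / (2 * Real.sqrt 2) * Real.exp (-(β * s / Real.sqrt 2)) *
          (Real.sqrt 2 * Real.cos (β * s / Real.sqrt 2))])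
    (B : Matrix (Fin 2) (Fin 2) ℝ) (hB : B = !![1, 0; 1, Real.sqrt 2])
    (L : ℝ → ℝ)
    (hL : ∀ u : ℝ, L u = β / (2 * Real.sqrt 2) * Real.exp (-(β * u / Real.sqrt 2)) *
      (Real.cos (β * u / Real.sqrt 2) + Real.sin (β * u / Real.sqrt 2)))
    (Kb : ℝ → ℝ → ℝ)
    (hKb : ∀ t s : ℝ, Kb t s = L |t - s| + q t ⬝ᵥ (-B).mulVec (r s)) :
    (∀ t s : ℝ, 0 ≤ t → 0 ≤ s →
      q t ⬝ᵥ (-B).mulVec (r s) =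
        β / (2 * Real.sqrt 2) * Real.exp (-(β * (t + s) / Real.sqrt 2)) *
          (Real.cos (β * (t - s) / Real.sqrt 2) +
            2 * Real.cos (β * t / Real.sqrt 2) * Real.cos (β * s / Real.sqrt 2) -
            Real.sin (β * (t + s) / Real.sqrt 2))) ∧
    (∀ s : ℝ, 0 ≤ s →
      Kb 0 s = Real.sqrt 2 * β * Real.exp (-(β * s / Real.sqrt 2)) *
        Real.cos (β * s / Real.sqrt 2)) := by
  have hs2 : (0:ℝ) < Real.sqrt 2 := Real.sqrt_pos.mpr (by norm_num)
  have hs2sq : Real.sqrt 2 * Real.sqrt 2 = 2 := Real.mul_self_sqrt (by norm_num)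
  have key : ∀ t s : ℝ, q t ⬝ᵥ (-B).mulVec (r s) =
      β / (2 * Real.sqrt 2) * Real.exp (-(β * (t + s) / Real.sqrt 2)) *
        (Real.cos (β * (t - s) / Real.sqrt 2) +
          2 * Real.cos (β * t / Real.sqrt 2) * Real.cos (β * s / Real.sqrt 2) -
          Real.sin (β * (t + s) / Real.sqrt 2)) := by
    intro t s
    rw [hq, hr, hB]
    have hadd : β * (t + s) / Real.sqrt 2 = β * t / Real.sqrt 2 + β * s / Real.sqrt 2 := by
      ring
    have hsub : β * (t - s) / Real.sqrt 2 = β * t / Real.sqrt 2 - β * s / Real.sqrt 2 := by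
      ring
    rw [hadd, hsub, Real.cos_sub, Real.sin_add,
      show -(β * t / Real.sqrt 2 + β * s / Real.sqrt 2)
        = -(β * t / Real.sqrt 2) + -(β * s / Real.sqrt 2) by ring, Real.exp_add]
    simp [Matrix.mulVec, dotProduct, Fin.sum_univ_two]
    have h2 : Real.sqrt 2 ^ 2 = 2 := Real.sq_sqrt (by norm_num)
    ring_nf
    rw [h2]
    ring
  refine ⟨fun t s _ _ => key t s, fun s hs => ?_⟩
  rw [hKb, key, hL]
  rw [show |(0:ℝ) - s| = s by rw [abs_sub_comm, sub_zero, abs_of_nonneg hs]]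
  simp only [zero_add, zero_sub, mul_zero, zero_div, Real.cos_zero, mul_neg, neg_div,
    Real.cos_neg]
  have h4 : β / (2 * Real.sqrt 2) * 4 = Real.sqrt 2 * β := by
    field_simp
    nlinarith [hs2sq]
  linear_combination (Real.exp (-(β * s / Real.sqrt 2)) * Real.cos (β * s / Real.sqrt 2)) * h4
end
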